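/- Per-prefix upper bound (key step in the proof of Lemma 5.1): For every conditionally i.i.d. coupling π of p^⊗K and q, every 1 ≤ i ≤ L, and every x^i ∈ Ω^i, the probability under π of the event that Y has length-i prefix x^i and at least one draft X_k has length-i prefix x^i is at most q(x^i)·[1 − (1 − min{p(x^i)/q(x^i), 1})^K] (the bound being 0 when q(x^i) = 0). -/

import Mathlib

attribute [local instance] Classical.propDecidable

noncomputable section

/-- `s ∈ Ω^L` has the length-`i` prefix `x ∈ Ω^i`. -/
def HasPref {Ω : Type*} {L i : ℕ} (s : Fin L → Ω) (x : Fin i → Ω) : Prop :=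
  ∀ j : Fin L, ∀ hj : (j : ℕ) < i, s j = x ⟨(j : ℕ), hj⟩

/-- Mass of the length-`i` prefix `x` under the block distribution `p` on `Ω^L`. -/
def prefProb {Ω : Type*} [Fintype Ω] {L i : ℕ} (p : (Fin L → Ω) → ℝ) (x : Fin i → Ω) : ℝ :=
  ∑ s : Fin L → Ω, if HasPref s x then p s else 0

/-- `Bound(K) = Σ_{i=1}^{L} Σ_{x^i ∈ Ω^i} q(x^i)·[1 − (1 − min{p(x^i)/q(x^i), 1})^K]`
(the summand with `q(x^i) = 0` is automatically `0`). -/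
def Bound {Ω : Type*} [Fintype Ω] {L : ℕ} (p q : (Fin L → Ω) → ℝ) (K : ℕ) : ℝ :=
  ∑ i ∈ Finset.range L, ∑ x : Fin (i + 1) → Ω,
    prefProb q x * (1 - (1 - min (prefProb p x / prefProb q x) 1) ^ K)

/-- `π` is a coupling of `p^{⊗K}` and `q`: a pmf on `(Ω^L)^K × Ω^L` whose
`(X_1, …, X_K)`-marginal is the `K`-fold product of `p` and whose `Y`-marginal is `q`. -/
def IsCoupling {Ω : Type*} [Fintype Ω] {L K : ℕ} (p q : (Fin L → Ω) → ℝ)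
    (π : (Fin K → Fin L → Ω) × (Fin L → Ω) → ℝ) : Prop :=
  (∀ z, 0 ≤ π z) ∧
  (∀ X : Fin K → Fin L → Ω, ∑ y : Fin L → Ω, π (X, y) = ∏ k : Fin K, p (X k)) ∧
  (∀ y : Fin L → Ω, ∑ X : Fin K → Fin L → Ω, π (X, y) = q y)

/-- `π` is a conditionally i.i.d. coupling of `p^{⊗K}` and `q`: there is a kernel `κ`
from `Ω^L` to pmfs on `Ω^L` with `π(x_1, …, x_K, y) = q(y)·Π_k κ(y)(x_k)`. -/
def IsCondIIDCoupling {Ω : Type*} [Fintype Ω] {L K : ℕ} (p q : (Fin L → Ω) → ℝ)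
    (π : (Fin K → Fin L → Ω) × (Fin L → Ω) → ℝ) : Prop :=
  IsCoupling p q π ∧
  ∃ κ : (Fin L → Ω) → (Fin L → Ω) → ℝ,
    (∀ y x, 0 ≤ κ y x) ∧ (∀ y, ∑ x : Fin L → Ω, κ y x = 1) ∧
    (∀ X : Fin K → Fin L → Ω, ∀ y : Fin L → Ω, π (X, y) = q y * ∏ k : Fin K, κ y (X k))

/-- Acceptance length `τ(x_1, …, x_K, y)`: the largest `i ∈ {0, …, L}` such that
some draft `x_k` agrees with `y` on the first `i` coordinates. -/
def accLen {Ω : Type*} {L K : ℕ} (X : Fin K → Fin L → Ω) (y : Fin L → Ω) : ℕ :=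
  ((Finset.range (L + 1)).filter
    (fun i => ∃ k : Fin K, ∀ j : Fin L, (j : ℕ) < i → X k j = y j)).sup id

/-- Tangent line inequality for convex `u ↦ u^K` at `v`. -/
lemma tangent_pow (K : ℕ) (hK : 1 ≤ K) (u v : ℝ) (hu : 0 ≤ u) (hv : 0 ≤ v) :
    v ^ K + K * v ^ (K - 1) * (u - v) ≤ u ^ K := by
  rcases eq_or_lt_of_le hv with h0 | h0
  · -- v = 0
    have hv0 : v = 0 := h0.symm
    subst hv0
    rcases Nat.eq_or_lt_of_le hK with h1 | h2
    · have : K = 1 := h1.symm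
      subst this
      simp
    · have hK1 : 1 ≤ K - 1 := by omega
      have hKne : K ≠ 0 := by omega
      have hK1ne : K - 1 ≠ 0 := by omega
      rw [zero_pow hKne, zero_pow hK1ne]
      have : (0:ℝ) ≤ u ^ K := pow_nonneg hu K
      simpa using this
  · have hvne : v ≠ 0 := ne_of_gt h0
    set a : ℝ := u / v - 1 with ha
    have ha2 : -2 ≤ a := by
      have : 0 ≤ u / v := div_nonneg hu hv
      simp only [ha]; linarith
    have hber := one_add_mul_le_pow ha2 K
    have h1a : 1 + a = u / v := by simp [ha]
    have hvK : (0:ℝ) ≤ v ^ K := pow_nonneg hv K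
    have hpow : v ^ K = v ^ (K - 1) * v := by
      rw [← pow_succ]; congr 1; omega
    have hva : v * a = u - v := by
      rw [ha, mul_sub, mul_div_cancel₀ _ hvne, mul_one]
    calc v ^ K + K * v ^ (K - 1) * (u - v) = v ^ K * (1 + K * a) := by
          rw [hpow, ← hva]; ring
      _ ≤ v ^ K * (1 + a) ^ K := mul_le_mul_of_nonneg_left hber hvK
      _ = u ^ K := by rw [h1a, ← mul_pow, mul_div_cancel₀ _ hvne]

/-- Per-prefix upper bound (key step in the proof of Lemma 5.1): for every
conditionally i.i.d. coupling `π`, every `1 ≤ i ≤ L` and every `x^i ∈ Ω^i`, the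
probability that `Y` has prefix `x^i` and some draft `X_k` has prefix `x^i` is at
most `q(x^i)·[1 − (1 − min{p(x^i)/q(x^i), 1})^K]`. -/
theorem per_prefix_upper_bound
    {Ω : Type*} [Fintype Ω] [Nonempty Ω] {L K : ℕ} (hL : 1 ≤ L) (hK : 1 ≤ K)
    (p q : (Fin L → Ω) → ℝ)
    (hp0 : ∀ s, 0 ≤ p s) (hp1 : ∑ s : Fin L → Ω, p s = 1)
    (hq0 : ∀ s, 0 ≤ q s) (hq1 : ∑ s : Fin L → Ω, q s = 1)
    (π : (Fin K → Fin L → Ω) × (Fin L → Ω) → ℝ)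
    (hπ : IsCondIIDCoupling p q π)
    (i : ℕ) (hi1 : 1 ≤ i) (hiL : i ≤ L) (x : Fin i → Ω) :
    (∑ z : (Fin K → Fin L → Ω) × (Fin L → Ω),
        if HasPref z.2 x ∧ (∃ k : Fin K, HasPref (z.1 k) x) then π z else 0)
      ≤ prefProb q x * (1 - (1 - min (prefProb p x / prefProb q x) 1) ^ K) := by
  obtain ⟨⟨hpos, hmX, hmY⟩, κ, hκ0, hκ1, hfac⟩ := hπ
  set A : Finset (Fin L → Ω) := Finset.univ.filter (fun s => HasPref s x) with hA
  set a : (Fin L → Ω) → ℝ := fun y => ∑ s ∈ A, κ y s with haa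
  have ha0 : ∀ y, 0 ≤ a y := fun y => Finset.sum_nonneg fun s _ => hκ0 y s
  have ha1 : ∀ y, a y ≤ 1 := fun y => by
    rw [← hκ1 y]
    exact Finset.sum_le_sum_of_subset_of_nonneg (Finset.subset_univ _)
      (fun s _ _ => hκ0 y s)
  have hcompl : ∀ y, ∑ s ∈ Aᶜ, κ y s = 1 - a y := by
    intro y
    have h := Finset.sum_add_sum_compl A (κ y)
    rw [hκ1 y] at h
    simp only [haa]; linarith
  have prefq : prefProb q x = ∑ y ∈ A, q y := by
    rw [prefProb, hA, Finset.sum_filter]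
  have prefp : prefProb p x = ∑ y ∈ A, p y := by
    rw [prefProb, hA, Finset.sum_filter]
  -- marginal of each single draft is p
  have hmarg : ∀ s, ∑ y : Fin L → Ω, q y * κ y s = p s := by
    intro s
    set k0 : Fin K := ⟨0, hK⟩ with hk0
    set t : Fin K → Finset (Fin L → Ω) := fun k => if k = k0 then {s} else Finset.univ with ht
    have h2 : ∑ X ∈ Fintype.piFinset t, ∏ k, p (X k) = p s := by
      rw [← Finset.prod_univ_sum]
      rw [Finset.prod_eq_single k0]
      · simp [ht]
      · intro b _ hb; simp [ht, hb, hp1]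
      · simp
    have h3 : ∑ X ∈ Fintype.piFinset t, ∑ y : Fin L → Ω, π (X, y)
        = ∑ y : Fin L → Ω, q y * κ y s := by
      rw [Finset.sum_comm]
      refine Finset.sum_congr rfl fun y _ => ?_
      calc ∑ X ∈ Fintype.piFinset t, π (X, y)
          = ∑ X ∈ Fintype.piFinset t, q y * ∏ k, κ y (X k) :=
            Finset.sum_congr rfl fun X _ => hfac X y
        _ = q y * ∑ X ∈ Fintype.piFinset t, ∏ k, κ y (X k) := by rw [Finset.mul_sum]
        _ = q y * ∏ k, ∑ u ∈ t k, κ y u := by rw [Finset.prod_univ_sum]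
        _ = q y * κ y s := by
            congr 1
            rw [Finset.prod_eq_single k0]
            · simp [ht]
            · intro b _ hb; simp [ht, hb, hκ1]
            · simp
    rw [← h3, ← h2]
    exact Finset.sum_congr rfl fun X _ => hmX X
  have hP0 : 0 ≤ prefProb p x := by
    rw [prefp]; exact Finset.sum_nonneg fun y _ => hp0 y
  have hQ0 : 0 ≤ prefProb q x := by
    rw [prefq]; exact Finset.sum_nonneg fun y _ => hq0 y
  have hsum_qa_p : ∑ y ∈ A, q y * a y ≤ prefProb p x := by
    have h1 : ∑ y ∈ A, q y * a y ≤ ∑ y : Fin L → Ω, q y * a y :=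
      Finset.sum_le_sum_of_subset_of_nonneg (Finset.subset_univ _)
        (fun y _ _ => mul_nonneg (hq0 y) (ha0 y))
    have h2 : ∑ y : Fin L → Ω, q y * a y = ∑ s ∈ A, ∑ y : Fin L → Ω, q y * κ y s := by
      simp only [haa, Finset.mul_sum]
      exact Finset.sum_comm
    rw [prefp]
    calc ∑ y ∈ A, q y * a y ≤ ∑ y : Fin L → Ω, q y * a y := h1
      _ = ∑ s ∈ A, ∑ y : Fin L → Ω, q y * κ y s := h2
      _ = ∑ s ∈ A, p s := Finset.sum_congr rfl fun s _ => hmarg s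
  have hsum_qa_q : ∑ y ∈ A, q y * a y ≤ prefProb q x := by
    rw [prefq]
    exact Finset.sum_le_sum fun y _ => mul_le_of_le_one_right (hq0 y) (ha1 y)
  -- rewrite LHS
  have hLHS : (∑ z : (Fin K → Fin L → Ω) × (Fin L → Ω),
        if HasPref z.2 x ∧ (∃ k : Fin K, HasPref (z.1 k) x) then π z else 0)
      = ∑ y ∈ A, q y * (1 - (1 - a y) ^ K) := by
    rw [Fintype.sum_prod_type, Finset.sum_comm]
    rw [hA, Finset.sum_filter]
    refine Finset.sum_congr rfl fun y _ => ?_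
    by_cases hy : HasPref y x
    · simp only [hy, true_and, if_true]
      have hsplit : ∀ X : Fin K → Fin L → Ω,
          (if (∃ k, HasPref (X k) x) then π (X, y) else 0)
          = π (X, y) - (if (∀ k, ¬ HasPref (X k) x) then π (X, y) else 0) := by
        intro X
        by_cases hE : ∃ k, HasPref (X k) x
        · rw [if_pos hE, if_neg (by push_neg; exact hE), sub_zero]
        · rw [if_neg hE, if_pos (by push_neg at hE; exact hE), sub_self]
      rw [Finset.sum_congr rfl fun X _ => hsplit X, Finset.sum_sub_distrib]
      have hall : ∑ X : Fin K → Fin L → Ω, π (X, y) = q y := hmY y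
      have hbad : (∑ X : Fin K → Fin L → Ω,
          if (∀ k, ¬ HasPref (X k) x) then π (X, y) else 0)
          = q y * (1 - a y) ^ K := by
        rw [← Finset.sum_filter]
        have hset : (Finset.univ.filter (fun X : Fin K → Fin L → Ω =>
            ∀ k, ¬ HasPref (X k) x)) = Fintype.piFinset (fun _ => Aᶜ) := by
          ext X
          simp [hA, Fintype.mem_piFinset]
        rw [hset]
        calc ∑ X ∈ Fintype.piFinset (fun _ : Fin K => Aᶜ), π (X, y)
            = ∑ X ∈ Fintype.piFinset (fun _ : Fin K => Aᶜ), q y * ∏ k, κ y (X k) :=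
              Finset.sum_congr rfl fun X _ => hfac X y
          _ = q y * ∑ X ∈ Fintype.piFinset (fun _ : Fin K => Aᶜ), ∏ k, κ y (X k) := by
              rw [Finset.mul_sum]
          _ = q y * ∏ _k : Fin K, ∑ u ∈ Aᶜ, κ y u := by rw [Finset.prod_univ_sum]
          _ = q y * (1 - a y) ^ K := by
              rw [Finset.prod_const, hcompl y, Finset.card_univ, Fintype.card_fin]
      rw [hall, hbad]
      ring
    · simp only [hy, false_and, if_false, Finset.sum_const_zero]
  rw [hLHS]
  -- now the Jensen / tangent-line argument
  rcases eq_or_lt_of_le hQ0 with hQz | hQpos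
  · -- prefProb q x = 0
    have hz : ∀ y ∈ A, q y = 0 := by
      have := (Finset.sum_eq_zero_iff_of_nonneg (fun y _ => hq0 y)).mp
        (by rw [← prefq]; exact hQz.symm)
      exact this
    have : ∑ y ∈ A, q y * (1 - (1 - a y) ^ K) = 0 :=
      Finset.sum_eq_zero fun y hy => by rw [hz y hy, zero_mul]
    rw [this, ← hQz, zero_mul]
  · set P := prefProb p x with hP
    set Q := prefProb q x with hQ
    set m : ℝ := min (P / Q) 1 with hm
    have hm0 : 0 ≤ m := le_min (div_nonneg hP0 (le_of_lt hQpos)) zero_le_one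
    have hm1 : m ≤ 1 := min_le_right _ _
    have hkey : ∑ y ∈ A, q y * a y ≤ Q * m := by
      rcases le_total (P / Q) 1 with hc | hc
      · rw [hm, min_eq_left hc, mul_comm, div_mul_cancel₀ _ (ne_of_gt hQpos)]
        exact hsum_qa_p
      · rw [hm, min_eq_right hc, mul_one]
        exact hsum_qa_q
    have htan : ∀ y ∈ A, q y * (1 - (1 - a y) ^ K)
        ≤ q y * ((1 - (1 - m) ^ K) + K * (1 - m) ^ (K - 1) * (a y - m)) := by
      intro y _
      refine mul_le_mul_of_nonneg_left ?_ (hq0 y)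
      have ht := tangent_pow K hK (1 - a y) (1 - m)
        (by linarith [ha1 y]) (by linarith)
      nlinarith [ht]
    have hD : (0:ℝ) ≤ (K : ℝ) * (1 - m) ^ (K - 1) :=
      mul_nonneg (Nat.cast_nonneg K) (pow_nonneg (by linarith) _)
    calc ∑ y ∈ A, q y * (1 - (1 - a y) ^ K)
        ≤ ∑ y ∈ A, q y * ((1 - (1 - m) ^ K) + K * (1 - m) ^ (K - 1) * (a y - m)) :=
          Finset.sum_le_sum htan
      _ = Q * (1 - (1 - m) ^ K)
          + (K : ℝ) * (1 - m) ^ (K - 1) * ((∑ y ∈ A, q y * a y) - Q * m) := by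
          have expand : ∀ y ∈ A,
              q y * ((1 - (1 - m) ^ K) + K * (1 - m) ^ (K - 1) * (a y - m))
              = (1 - (1 - m) ^ K) * q y
                + ((K : ℝ) * (1 - m) ^ (K - 1)) * (q y * a y)
                - ((K : ℝ) * (1 - m) ^ (K - 1) * m) * q y := fun y _ => by ring
          rw [Finset.sum_congr rfl expand, Finset.sum_sub_distrib,
            Finset.sum_add_distrib, ← Finset.mul_sum, ← Finset.mul_sum,
            ← Finset.mul_sum, ← prefq]
          ring
      _ ≤ Q * (1 - (1 - m) ^ K) := by
          nlinarith [mul_nonneg hD (sub_nonneg.mpr hkey)]
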